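/- Let t_1 < t_2 be real numbers with δ = t_2 − t_1, let λ > 1, ε > 0, and Λ_1, Λ_2 ≥ 0 be real constants with e^{Λ_2 δ} < λ. Let w, p : ℝ → ℝ be differentiable on [t_1, t_2] with p(t) > 0 for all t ∈ [t_1, t_2], and suppose that for all t ∈ [t_1, t_2]: w'(t) ≤ Λ_1 · p(t) and p'(t) ≤ Λ_2 · p(t). If moreover w(t_1) ≤ −ε · p(t_1) and w(t_2) ≥ −(ε/λ) · p(t_2), then ε ≤ λ Λ_1 e^{Λ_2 δ} δ / (λ − e^{Λ_2 δ}). -/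

import Mathlib

open Set

/-- **Dwell-time inequality.** If on `[t₁, t₂]` the derivative of `w` is bounded
by `Λ₁ * p` and the derivative of `p` by `Λ₂ * p` (with `p > 0`), and
`w t₁ ≤ -ε * p t₁` while `w t₂ ≥ -(ε / λ) * p t₂`, with `e^{Λ₂ δ} < λ` for
`δ = t₂ - t₁`, then `ε ≤ λ Λ₁ e^{Λ₂ δ} δ / (λ - e^{Λ₂ δ})`. -/
theorem dwell_time_bound
    (t₁ t₂ δ lam ε Λ₁ Λ₂ : ℝ) (w p w' p' : ℝ → ℝ)
    (ht : t₁ < t₂) (hδ : δ = t₂ - t₁)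
    (hlam : 1 < lam) (hε : 0 < ε) (hΛ₁ : 0 ≤ Λ₁) (hΛ₂ : 0 ≤ Λ₂)
    (hexp : Real.exp (Λ₂ * δ) < lam)
    (hw : ∀ t ∈ Icc t₁ t₂, HasDerivWithinAt w (w' t) (Icc t₁ t₂) t)
    (hp : ∀ t ∈ Icc t₁ t₂, HasDerivWithinAt p (p' t) (Icc t₁ t₂) t)
    (hppos : ∀ t ∈ Icc t₁ t₂, 0 < p t)
    (hw' : ∀ t ∈ Icc t₁ t₂, w' t ≤ Λ₁ * p t)
    (hp' : ∀ t ∈ Icc t₁ t₂, p' t ≤ Λ₂ * p t)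
    (hw₁ : w t₁ ≤ -ε * p t₁)
    (hw₂ : w t₂ ≥ -(ε / lam) * p t₂) :
    ε ≤ lam * Λ₁ * Real.exp (Λ₂ * δ) * δ / (lam - Real.exp (Λ₂ * δ)) := by
  set E : ℝ := Real.exp (Λ₂ * δ) with hE
  have hEpos : (0:ℝ) < E := Real.exp_pos _
  have ht₁m : t₁ ∈ Icc t₁ t₂ := ⟨le_rfl, ht.le⟩
  have ht₂m : t₂ ∈ Icc t₁ t₂ := ⟨ht.le, le_rfl⟩
  have hp₁ : 0 < p t₁ := hppos t₁ ht₁m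
  have hintIoo : interior (Icc t₁ t₂) = Ioo t₁ t₂ := interior_Icc
  have hderivAt : ∀ t ∈ Ioo t₁ t₂, HasDerivAt p (p' t) t := fun t htm =>
    (hp t (Ioo_subset_Icc_self htm)).hasDerivAt (Icc_mem_nhds htm.1 htm.2)
  have hwderivAt : ∀ t ∈ Ioo t₁ t₂, HasDerivAt w (w' t) t := fun t htm =>
    (hw t (Ioo_subset_Icc_self htm)).hasDerivAt (Icc_mem_nhds htm.1 htm.2)
  have hpc : ContinuousOn p (Icc t₁ t₂) := fun t htm => (hp t htm).continuousWithinAt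
  have hwccont : ContinuousOn w (Icc t₁ t₂) := fun t htm => (hw t htm).continuousWithinAt
  -- Gronwall: G t = p t * exp(-Λ₂ (t - t₁)) is antitone on Icc
  set G : ℝ → ℝ := fun t => p t * Real.exp (-Λ₂ * (t - t₁)) with hG
  have hEderiv : ∀ t : ℝ, HasDerivAt (fun s => Real.exp (-Λ₂ * (s - t₁)))
      (Real.exp (-Λ₂ * (t - t₁)) * (-Λ₂)) t := by
    intro t
    have h1 : HasDerivAt (fun s : ℝ => -Λ₂ * (s - t₁)) (-Λ₂) t := by
      simpa using (((hasDerivAt_id t).sub_const t₁).const_mul (-Λ₂))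
    simpa [mul_comm] using h1.exp
  have hGderiv : ∀ t ∈ Ioo t₁ t₂, HasDerivAt G
      (p' t * Real.exp (-Λ₂ * (t - t₁)) + p t * (Real.exp (-Λ₂ * (t - t₁)) * (-Λ₂))) t :=
    fun t htm => (hderivAt t htm).mul (hEderiv t)
  have hGanti : AntitoneOn G (Icc t₁ t₂) := by
    apply antitoneOn_of_deriv_nonpos (convex_Icc t₁ t₂)
    · exact hpc.mul (Real.continuous_exp.comp (by continuity)).continuousOn
    · rw [hintIoo]
      exact fun t htm => (hGderiv t htm).differentiableAt.differentiableWithinAt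
    · rw [hintIoo]
      intro t htm
      rw [(hGderiv t htm).deriv]
      have h1 := hp' t (Ioo_subset_Icc_self htm)
      have h2 : (0:ℝ) < Real.exp (-Λ₂ * (t - t₁)) := Real.exp_pos _
      nlinarith
  have hGron : ∀ t ∈ Icc t₁ t₂, p t ≤ p t₁ * E := by
    intro t htm
    have h1 : G t ≤ G t₁ := hGanti ht₁m htm htm.1
    have h2 : G t₁ = p t₁ := by simp [hG]
    have h3 : p t * Real.exp (-Λ₂ * (t - t₁)) ≤ p t₁ := by rw [← h2]; exact h1
    have h4 : p t ≤ p t₁ * Real.exp (Λ₂ * (t - t₁)) := by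
      have := mul_le_mul_of_nonneg_right h3 (Real.exp_pos (Λ₂ * (t - t₁))).le
      rwa [mul_assoc, ← Real.exp_add, (by ring : -Λ₂ * (t - t₁) + Λ₂ * (t - t₁) = 0),
        Real.exp_zero, mul_one] at this
    have h5 : Real.exp (Λ₂ * (t - t₁)) ≤ E := by
      apply Real.exp_le_exp.mpr
      have : t - t₁ ≤ δ := by rw [hδ]; linarith [htm.2]
      nlinarith
    calc p t ≤ p t₁ * Real.exp (Λ₂ * (t - t₁)) := h4
      _ ≤ p t₁ * E := by nlinarith
  -- bound on w: H t = w t - Λ₁ * (p t₁ * E) * t is antitone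
  set C : ℝ := Λ₁ * (p t₁ * E) with hC
  set H : ℝ → ℝ := fun t => w t - C * t with hH
  have hHanti : AntitoneOn H (Icc t₁ t₂) := by
    apply antitoneOn_of_deriv_nonpos (convex_Icc t₁ t₂)
    · exact hwccont.sub (continuous_const.mul continuous_id).continuousOn
    · rw [hintIoo]
      intro t htm
      exact ((hwderivAt t htm).sub ((hasDerivAt_id t).const_mul C)).differentiableAt.differentiableWithinAt
    · rw [hintIoo]
      intro t htm
      have hHd : HasDerivAt H (w' t - C) t := by
        have h := (hwderivAt t htm).sub ((hasDerivAt_id t).const_mul C)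
        rw [mul_one] at h
        exact h
      rw [hHd.deriv]
      have h1 := hw' t (Ioo_subset_Icc_self htm)
      have h2 := hGron t (Ioo_subset_Icc_self htm)
      have : Λ₁ * p t ≤ C := by rw [hC]; nlinarith
      linarith
  have hwbound : w t₂ ≤ w t₁ + C * δ := by
    have := hHanti ht₁m ht₂m ht.le
    simp only [hH] at this
    rw [hδ]; linarith
  -- chain of inequalities
  have hp₂E : p t₂ ≤ p t₁ * E := hGron t₂ ht₂m
  have hlam0 : (0:ℝ) < lam := lt_trans one_pos hlam
  have hεlam : 0 < ε / lam := div_pos hε hlam0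
  have hlow : -(ε / lam) * (p t₁ * E) ≤ w t₂ := by
    have : -(ε / lam) * (p t₁ * E) ≤ -(ε / lam) * p t₂ := by nlinarith
    linarith [hw₂]
  have hkey : -(ε / lam) * (p t₁ * E) ≤ -ε * p t₁ + C * δ := by
    calc -(ε / lam) * (p t₁ * E) ≤ w t₂ := hlow
      _ ≤ w t₁ + C * δ := hwbound
      _ ≤ -ε * p t₁ + C * δ := by linarith [hw₁]
  -- divide by p t₁ > 0 and rearrange
  have hδpos : 0 < δ := by rw [hδ]; linarith
  have hdiff : 0 < lam - E := by linarith
  rw [le_div_iff₀ hdiff]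
  -- from hkey: ε * (lam - E) * p t₁ ≤ lam * Λ₁ * E * δ * p t₁
  have hkey2 : ε * (lam - E) * p t₁ ≤ lam * Λ₁ * E * δ * p t₁ := by
    have h := mul_le_mul_of_nonneg_left hkey hlam0.le
    rw [hC] at h
    have hdl : lam * (-(ε / lam) * (p t₁ * E)) = -ε * (p t₁ * E) := by
      field_simp
    nlinarith [h]
  nlinarith [hkey2, hp₁]
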